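/- Let [a], [b] ∈ Λ₂ be distinct. Then mult(a,b) = 6 if and only if either Supp(a) = Supp(b), or Supp(a) ∩ Supp(b) = ∅ and prod(a+b) = ±1 (a condition independent of the chosen representatives). -/

import Mathlib

open Complex

noncomputable section

namespace G31

/-- Vectors `a = (a₁,a₂,a₃,a₄) ∈ ℂ⁴`. -/
abbrev V : Type := Fin 4 → ℂ

/-- `μ₄ ⊂ ℂ`, the group of fourth roots of unity `{1, i, -1, -i}`. -/
def mu4 : Set ℂ := {z : ℂ | z ^ 4 = 1}

/-- `Ψ = μ₄ ∪ {0}`. -/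
def Psi : Set ℂ := insert 0 mu4

/-- `a ∈ Ψ⁴`. -/
def PsiV (a : V) : Prop := ∀ k, a k ∈ Psi

/-- The diagonal multiplicative action of `μ₄` on `ℂ⁴`: `a ~ b` iff `b = ξ • a` for some
`ξ ∈ μ₄`. -/
def rel (a b : V) : Prop := ∃ ξ : ℂ, ξ ^ 4 = 1 ∧ b = ξ • a

theorem rel_refl (a : V) : rel a a := ⟨1, by norm_num, by simp⟩

theorem rel_symm {a b : V} (h : rel a b) : rel b a := by
  obtain ⟨ξ, hξ, rfl⟩ := h
  refine ⟨ξ ^ 3, by rw [show (ξ ^ 3) ^ 4 = (ξ ^ 4) ^ 3 by ring, hξ, one_pow], ?_⟩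
  rw [smul_smul, show ξ ^ 3 * ξ = ξ ^ 4 by ring, hξ, one_smul]

theorem rel_trans {a b c : V} (h : rel a b) (h' : rel b c) : rel a c := by
  obtain ⟨ξ, hξ, rfl⟩ := h
  obtain ⟨η, hη, rfl⟩ := h'
  exact ⟨η * ξ, by rw [mul_pow, hξ, hη, one_mul], by rw [smul_smul]⟩

/-- The setoid on `ℂ⁴` given by the diagonal `μ₄`-action. -/
def phiSetoid : Setoid V := ⟨rel, rel_refl, rel_symm, rel_trans⟩

/-- `Φ`, the quotient of `Ψ⁴` (here of `ℂ⁴`) by the diagonal `μ₄`-action. -/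
def Phi : Type := Quotient phiSetoid

/-- The class `[a] ∈ Φ` of `a`. -/
def cls (a : V) : Phi := Quotient.mk phiSetoid a

/-- `Supp a = {k : aₖ ≠ 0}`. -/
def Supp (a : V) : Set (Fin 4) := {k | a k ≠ 0}

/-- `prod a = a₁a₂a₃a₄`. -/
def prod4 (a : V) : ℂ := ∏ k, a k

/-- The hyperplane `X_a = {x : ∑ aₖ xₖ = 0} ⊂ ℂ⁴`. -/
def Xa (a : V) : Set V := {x | ∑ k, a k * x k = 0}

/-- The support of a class `[a] ∈ Φ` (independent of the representative). -/
def SuppC (c : Phi) : Set (Fin 4) := {k | ∃ a : V, cls a = c ∧ a k ≠ 0}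

/-- `Λ₁ = {[a] : a ∈ Ψ⁴, |Supp a| = 1}`. -/
def Lambda1 : Set Phi := {c | ∃ a : V, cls a = c ∧ PsiV a ∧ (Supp a).ncard = 1}

/-- `Λ₂ = {[a] : a ∈ Ψ⁴, |Supp a| = 2}`. -/
def Lambda2 : Set Phi := {c | ∃ a : V, cls a = c ∧ PsiV a ∧ (Supp a).ncard = 2}

/-- `Λ₃ = {[a] : a ∈ Ψ⁴, |Supp a| = 4, prod a = ±1}`. -/
def Lambda3 : Set Phi :=
  {c | ∃ a : V, cls a = c ∧ PsiV a ∧ (Supp a).ncard = 4 ∧ (prod4 a = 1 ∨ prod4 a = -1)}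

/-- `Λ = Λ₁ ⊔ Λ₂ ⊔ Λ₃`, the hyperplanes of the reflection arrangement of type `G₃₁`. -/
def Lambda : Set Phi := Lambda1 ∪ Lambda2 ∪ Lambda3

/-- `Λ̂(a,b) = {[c] ∈ Λ : X_c ⊇ X_a ∩ X_b}` (all notions independent of representatives). -/
def LambdaHat (A B : Phi) : Set Phi :=
  {c | c ∈ Lambda ∧ ∃ xa xb xc : V, cls xa = A ∧ cls xb = B ∧ cls xc = c ∧
    Xa xa ∩ Xa xb ⊆ Xa xc}

/-- `mult(a,b) = |Λ̂(a,b)|`. -/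
def mult (A B : Phi) : ℕ := (LambdaHat A B).ncard

/-- `Λ(a,b) = Λ̂(a,b) \ {[a],[b]}`. -/
def LambdaAB (A B : Phi) : Set Phi := LambdaHat A B \ {A, B}

/-- `Λ_{j'}^m(a) = {[b] ∈ Λ_{j'} : [b] ≠ [a], mult(a,b) = m}`, where `S` stands for `Λ_{j'}`. -/
def LambdaPow (S : Set Phi) (m : ℕ) (A : Phi) : Set Phi :=
  {B | B ∈ S ∧ B ≠ A ∧ mult A B = m}

/-- `diff([a],[b]) = min_ξ |Supp (ξ a − b)|`, the minimum over representatives. -/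
def diffC (A B : Phi) : ℕ :=
  sInf {n | ∃ a b : V, cls a = A ∧ cls b = B ∧ (Supp (a - b)).ncard = n}

end G31
namespace G31

-- ===== infrastructure =====

lemma cls_eq_iff {a b : V} : cls a = cls b ↔ rel a b :=
  ⟨fun h => Quotient.exact h, fun h => Quotient.sound h⟩

lemma pow4_ne_zero {z : ℂ} (h : z ^ 4 = 1) : z ≠ 0 := by
  rintro rfl; simp at h

lemma Supp_rel {a b : V} (h : rel a b) : Supp a = Supp b := by
  obtain ⟨ξ, hξ, rfl⟩ := h
  ext k
  simp [Supp, smul_eq_mul, mul_eq_zero, pow4_ne_zero hξ]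

lemma PsiV_rel {a b : V} (h : rel a b) (ha : PsiV a) : PsiV b := by
  obtain ⟨ξ, hξ, rfl⟩ := h
  intro k
  have := ha k
  simp only [Psi, mu4, Set.mem_insert_iff, Set.mem_setOf_eq, Pi.smul_apply,
    smul_eq_mul] at this ⊢
  rcases this with h | h
  · left; simp [h]
  · right; rw [mul_pow, hξ, h, one_mul]

lemma Xa_rel {a b : V} (h : rel a b) : Xa a = Xa b := by
  obtain ⟨ξ, hξ, rfl⟩ := h
  ext x
  simp only [Xa, Set.mem_setOf_eq, Pi.smul_apply, smul_eq_mul, mul_assoc,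
    ← Finset.mul_sum]
  constructor
  · intro h; rw [h, mul_zero]
  · intro h
    rcases mul_eq_zero.mp h with h | h
    · exact absurd h (pow4_ne_zero hξ)
    · exact h

lemma psiv_pow {a : V} (ha : PsiV a) {k : Fin 4} (hk : a k ≠ 0) : a k ^ 4 = 1 := by
  have := ha k
  simp only [Psi, mu4, Set.mem_insert_iff, Set.mem_setOf_eq] at this
  tauto

lemma cls_smul {ξ : ℂ} (hξ : ξ ^ 4 = 1) (a : V) : cls (ξ • a) = cls a :=
  (cls_eq_iff.mpr ⟨ξ, hξ, rfl⟩).symm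

lemma cls_ne_of_supp {u v : V} (h : Supp u ≠ Supp v) : cls u ≠ cls v :=
  fun h' => h (Supp_rel (cls_eq_iff.mp h'))

lemma lambda2_rep {A : Phi} (hA : A ∈ Lambda2) {a : V} (ha : cls a = A) :
    PsiV a ∧ (Supp a).ncard = 2 := by
  obtain ⟨a', ha', hP, hn⟩ := hA
  have hr : rel a' a := cls_eq_iff.mp (ha'.trans ha.symm)
  exact ⟨PsiV_rel hr hP, by rw [← Supp_rel hr]; exact hn⟩

lemma sq_cases {z : ℂ} (h : z ^ 2 = 1) : z = 1 ∨ z = -1 := by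
  have h2 : (z - 1) * (z + 1) = 0 := by linear_combination h
  rcases mul_eq_zero.mp h2 with h3 | h3
  · left; linear_combination h3
  · right; linear_combination h3

lemma pow4_sq_cases {z : ℂ} (h : z ^ 4 = 1) : z ^ 2 = 1 ∨ z ^ 2 = -1 :=
  sq_cases (by rw [← pow_mul]; exact h)

lemma mu4_cases {z : ℂ} (h : z ^ 4 = 1) : z = 1 ∨ z = I ∨ z = -1 ∨ z = -I := by
  have h2 : (z - 1) * (z + 1) * (z - I) * (z + I) = 0 := by
    linear_combination h + (1 - z ^ 2) * Complex.I_sq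
  rcases mul_eq_zero.mp h2 with h3 | h3
  · rcases mul_eq_zero.mp h3 with h4 | h4
    · rcases mul_eq_zero.mp h4 with h5 | h5
      · exact Or.inl (by linear_combination h5)
      · exact Or.inr (Or.inr (Or.inl (by linear_combination h5)))
    · exact Or.inr (Or.inl (by linear_combination h4))
  · exact Or.inr (Or.inr (Or.inr (by linear_combination h3)))

lemma sum_eq_pair {f : Fin 4 → ℂ} {i j : Fin 4} (hij : i ≠ j)
    (h : ∀ m, m ≠ i → m ≠ j → f m = 0) : ∑ m, f m = f i + f j := by
  rw [← Finset.sum_pair hij]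
  refine (Finset.sum_subset (Finset.subset_univ _) ?_).symm
  intro m _ hm
  simp only [Finset.mem_insert, Finset.mem_singleton, not_or] at hm
  exact h m hm.1 hm.2

lemma univ_eq_four {i j k l : Fin 4} (hij : i ≠ j) (hik : i ≠ k) (hil : i ≠ l)
    (hjk : j ≠ k) (hjl : j ≠ l) (hkl : k ≠ l) :
    ({i, j, k, l} : Finset (Fin 4)) = Finset.univ := by
  apply Finset.eq_univ_of_card
  rw [Finset.card_insert_of_notMem (by simp [hij, hik, hil]),
      Finset.card_insert_of_notMem (by simp [hjk, hjl]),
      Finset.card_insert_of_notMem (by simp [hkl]), Finset.card_singleton]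
  simp

lemma sum_eq_four (f : Fin 4 → ℂ) {i j k l : Fin 4} (hij : i ≠ j) (hik : i ≠ k)
    (hil : i ≠ l) (hjk : j ≠ k) (hjl : j ≠ l) (hkl : k ≠ l) :
    ∑ m, f m = f i + f j + f k + f l := by
  rw [← univ_eq_four hij hik hil hjk hjl hkl,
      Finset.sum_insert (by simp [hij, hik, hil]),
      Finset.sum_insert (by simp [hjk, hjl]),
      Finset.sum_insert (by simp [hkl]), Finset.sum_singleton]
  ring

lemma prod_eq_four (f : Fin 4 → ℂ) {i j k l : Fin 4} (hij : i ≠ j) (hik : i ≠ k)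
    (hil : i ≠ l) (hjk : j ≠ k) (hjl : j ≠ l) (hkl : k ≠ l) :
    ∏ m, f m = f i * f j * f k * f l := by
  rw [← univ_eq_four hij hik hil hjk hjl hkl,
      Finset.prod_insert (by simp [hij, hik, hil]),
      Finset.prod_insert (by simp [hjk, hjl]),
      Finset.prod_insert (by simp [hkl]), Finset.prod_singleton]
  ring

lemma exists_fourth {p q r : Fin 4} (hpq : p ≠ q) (hpr : p ≠ r) (hqr : q ≠ r) :
    ∃ s, s ≠ p ∧ s ≠ q ∧ s ≠ r := by
  revert hpq hpr hqr; revert p q r; decide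

lemma mem_lambdaHat_iff {A B C : Phi} {a b w : V} (ha : cls a = A) (hb : cls b = B)
    (hw : cls w = C) :
    C ∈ LambdaHat A B ↔ C ∈ Lambda ∧ Xa a ∩ Xa b ⊆ Xa w := by
  constructor
  · rintro ⟨hC, xa, xb, xc, hxa, hxb, hxc, hsub⟩
    refine ⟨hC, ?_⟩
    rw [Xa_rel (cls_eq_iff.mp (ha.trans hxa.symm)),
        Xa_rel (cls_eq_iff.mp (hb.trans hxb.symm)),
        Xa_rel (cls_eq_iff.mp (hw.trans hxc.symm))]
    exact hsub
  · rintro ⟨hC, hsub⟩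
    exact ⟨hC, a, b, w, ha, hb, hw, hsub⟩

lemma ncard_eq_two' {α : Type*} {p1 p2 : α} (h : p1 ≠ p2) :
    ({p1, p2} : Set α).ncard = 2 := Set.ncard_pair h

lemma ncard_eq_three' {α : Type*} {p1 p2 p3 : α} (h12 : p1 ≠ p2) (h13 : p1 ≠ p3)
    (h23 : p2 ≠ p3) : ({p1, p2, p3} : Set α).ncard = 3 := by
  rw [Set.ncard_insert_of_notMem (by simp [h12, h13]) (Set.toFinite _),
      Set.ncard_pair h23]

lemma ncard_eq_six' {α : Type*} {p1 p2 p3 p4 p5 p6 : α}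
    (h12 : p1 ≠ p2) (h13 : p1 ≠ p3) (h14 : p1 ≠ p4) (h15 : p1 ≠ p5) (h16 : p1 ≠ p6)
    (h23 : p2 ≠ p3) (h24 : p2 ≠ p4) (h25 : p2 ≠ p5) (h26 : p2 ≠ p6)
    (h34 : p3 ≠ p4) (h35 : p3 ≠ p5) (h36 : p3 ≠ p6)
    (h45 : p4 ≠ p5) (h46 : p4 ≠ p6) (h56 : p5 ≠ p6) :
    ({p1, p2, p3, p4, p5, p6} : Set α).ncard = 6 := by
  rw [Set.ncard_insert_of_notMem (by simp [h12, h13, h14, h15, h16]) (Set.toFinite _),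
      Set.ncard_insert_of_notMem (by simp [h23, h24, h25, h26]) (Set.toFinite _),
      Set.ncard_insert_of_notMem (by simp [h34, h35, h36]) (Set.toFinite _),
      Set.ncard_insert_of_notMem (by simp [h45, h46]) (Set.toFinite _),
      Set.ncard_pair h56]


-- ===== constructions =====

/-- standard basis vector -/
def v1 (i : Fin 4) : V := fun m => if m = i then 1 else 0

/-- vector supported on two coordinates -/
def v2 (i j : Fin 4) (s t : ℂ) : V := fun m => if m = i then s else if m = j then t else 0

/-- vector supported on four coordinates -/
def v4 (i j k l : Fin 4) (s t u v : ℂ) : V :=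
  fun m => if m = i then s else if m = j then t else if m = k then u else
    if m = l then v else 0

lemma v1_self (i : Fin 4) : v1 i i = 1 := if_pos rfl
lemma v1_ne {i m : Fin 4} (h : m ≠ i) : v1 i m = 0 := if_neg h

lemma v2_i {i j : Fin 4} (s t : ℂ) : v2 i j s t i = s := if_pos rfl
lemma v2_j {i j : Fin 4} (h : i ≠ j) (s t : ℂ) : v2 i j s t j = t := by
  simp [v2, h.symm]
lemma v2_ne {i j m : Fin 4} (h1 : m ≠ i) (h2 : m ≠ j) (s t : ℂ) : v2 i j s t m = 0 := by
  simp [v2, h1, h2]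

lemma Supp_v1 (i : Fin 4) : Supp (v1 i) = {i} := by
  ext m
  by_cases h : m = i <;> simp [Supp, v1, h]

lemma Supp_v2 {i j : Fin 4} (hij : i ≠ j) {s t : ℂ} (hs : s ≠ 0) (ht : t ≠ 0) :
    Supp (v2 i j s t) = {i, j} := by
  ext m
  by_cases h1 : m = i
  · simp [Supp, v2, h1, hs]
  · by_cases h2 : m = j <;> simp [Supp, v2, h1, h2, hij.symm, hs, ht]

lemma PsiV_v1 (i : Fin 4) : PsiV (v1 i) := by
  intro m
  by_cases h : m = i <;> simp [Psi, mu4, v1, h]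

lemma PsiV_v2 {i j : Fin 4} {s t : ℂ} (hs : s ^ 4 = 1) (ht : t ^ 4 = 1) :
    PsiV (v2 i j s t) := by
  intro m
  simp only [Psi, mu4, Set.mem_insert_iff, Set.mem_setOf_eq, v2]
  split_ifs <;> tauto

lemma PsiV_v4 {i j k l : Fin 4} {s t u v : ℂ} (hs : s ^ 4 = 1) (ht : t ^ 4 = 1)
    (hu : u ^ 4 = 1) (hv : v ^ 4 = 1) : PsiV (v4 i j k l s t u v) := by
  intro m
  simp only [Psi, mu4, Set.mem_insert_iff, Set.mem_setOf_eq, v4]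
  split_ifs <;> tauto

lemma Supp_v4 {i j k l : Fin 4} (hij : i ≠ j) (hik : i ≠ k) (hil : i ≠ l)
    (hjk : j ≠ k) (hjl : j ≠ l) (hkl : k ≠ l) {s t u v : ℂ}
    (hs : s ≠ 0) (ht : t ≠ 0) (hu : u ≠ 0) (hv : v ≠ 0) :
    Supp (v4 i j k l s t u v) = Set.univ := by
  ext m
  simp only [Set.mem_univ, iff_true, Supp, Set.mem_setOf_eq]
  have hm : m = i ∨ m = j ∨ m = k ∨ m = l := by
    have := univ_eq_four hij hik hil hjk hjl hkl
    have hmem : m ∈ ({i, j, k, l} : Finset (Fin 4)) := by rw [this]; exact Finset.mem_univ m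
    simpa using hmem
  rcases hm with rfl | rfl | rfl | rfl
  · simpa [v4] using hs
  · simpa [v4, hij.symm] using ht
  · simpa [v4, hik.symm, hjk.symm] using hu
  · simpa [v4, hil.symm, hjl.symm, hkl.symm] using hv

lemma mem_lambda1_v1 (i : Fin 4) : cls (v1 i) ∈ Lambda := by
  left; left
  exact ⟨v1 i, rfl, PsiV_v1 i, by rw [Supp_v1]; exact Set.ncard_singleton i⟩

lemma mem_lambda2_v2 {i j : Fin 4} (hij : i ≠ j) {s t : ℂ} (hs : s ^ 4 = 1)
    (ht : t ^ 4 = 1) : cls (v2 i j s t) ∈ Lambda := by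
  left; right
  exact ⟨v2 i j s t, rfl, PsiV_v2 hs ht,
    by rw [Supp_v2 hij (pow4_ne_zero hs) (pow4_ne_zero ht)]; exact Set.ncard_pair hij⟩

lemma prod4_v4 {i j k l : Fin 4} (hij : i ≠ j) (hik : i ≠ k) (hil : i ≠ l)
    (hjk : j ≠ k) (hjl : j ≠ l) (hkl : k ≠ l) (s t u v : ℂ) :
    prod4 (v4 i j k l s t u v) = s * t * u * v := by
  rw [prod4, prod_eq_four _ hij hik hil hjk hjl hkl]
  simp [v4, hij.symm, hik.symm, hil.symm, hjk.symm, hjl.symm, hkl.symm]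

lemma mem_lambda3_v4 {i j k l : Fin 4} (hij : i ≠ j) (hik : i ≠ k) (hil : i ≠ l)
    (hjk : j ≠ k) (hjl : j ≠ l) (hkl : k ≠ l) {s t u v : ℂ} (hs : s ^ 4 = 1)
    (ht : t ^ 4 = 1) (hu : u ^ 4 = 1) (hv : v ^ 4 = 1)
    (hp : s * t * u * v = 1 ∨ s * t * u * v = -1) :
    cls (v4 i j k l s t u v) ∈ Lambda := by
  right
  refine ⟨v4 i j k l s t u v, rfl, PsiV_v4 hs ht hu hv, ?_, ?_⟩
  · rw [Supp_v4 hij hik hil hjk hjl hkl (pow4_ne_zero hs) (pow4_ne_zero ht)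
      (pow4_ne_zero hu) (pow4_ne_zero hv), Set.ncard_univ]
    simp
  · rwa [prod4_v4 hij hik hil hjk hjl hkl]

lemma dot_v1 (c : V) (m : Fin 4) : ∑ k, c k * v1 m k = c m := by
  rw [Finset.sum_eq_single m]
  · simp [v1]
  · intro n _ hn; simp [v1, hn]
  · simp

lemma mem_Xa_v2 {i j : Fin 4} (hij : i ≠ j) (s t : ℂ) (x : V) :
    x ∈ Xa (v2 i j s t) ↔ s * x i + t * x j = 0 := by
  simp only [Xa, Set.mem_setOf_eq]
  rw [sum_eq_pair hij (f := fun m => v2 i j s t m * x m)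
    (fun m h1 h2 => by simp [v2, h1, h2]), v2_i, v2_j hij]


-- ===== distinctness and normalization =====

lemma supp_pair_facts {a : V} {i j : Fin 4} (h : Supp a = {i, j}) :
    a i ≠ 0 ∧ a j ≠ 0 ∧ ∀ m, m ≠ i → m ≠ j → a m = 0 := by
  refine ⟨?_, ?_, ?_⟩
  · have : i ∈ Supp a := by rw [h]; simp
    exact this
  · have : j ∈ Supp a := by rw [h]; simp
    exact this
  · intro m h1 h2
    by_contra hm
    have : m ∈ Supp a := hm
    rw [h] at this
    simp [h1, h2] at this

lemma supp_single_facts {w : V} {m : Fin 4} (h : Supp w = {m}) :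
    w m ≠ 0 ∧ ∀ n, n ≠ m → w n = 0 := by
  constructor
  · have : m ∈ Supp w := by rw [h]; rfl
    exact this
  · intro n hn
    by_contra hw
    have : n ∈ Supp w := hw
    rw [h] at this
    exact hn this

lemma mem_Xa_of_pair {a : V} {i j : Fin 4} (hij : i ≠ j)
    (h0 : ∀ m, m ≠ i → m ≠ j → a m = 0) (x : V) :
    x ∈ Xa a ↔ a i * x i + a j * x j = 0 := by
  simp only [Xa, Set.mem_setOf_eq]
  rw [sum_eq_pair hij (f := fun m => a m * x m) (fun m h1 h2 => by simp [h0 m h1 h2])]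

lemma dot_v1' (x : V) (m : Fin 4) : ∑ k, v1 m k * x k = x m := by
  rw [Finset.sum_eq_single m]
  · simp [v1]
  · intro n _ hn; simp [v1, hn]
  · simp

lemma cls_eq_v1 {w : V} {m : Fin 4} (hP : PsiV w) (h : Supp w = {m}) :
    cls w = cls (v1 m) := by
  obtain ⟨hwm, hw0⟩ := supp_single_facts h
  have hw : w = w m • v1 m := by
    funext n
    by_cases hn : n = m
    · subst hn; simp [v1]
    · simp [v1, hn, hw0 n hn]
  rw [hw, cls_smul (psiv_pow hP hwm)]

lemma cls_eq_v2 {w : V} {i j : Fin 4} (hij : i ≠ j) (hP : PsiV w) (h : Supp w = {i, j}) :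
    cls w = cls (v2 i j 1 (w j / w i)) := by
  obtain ⟨hwi, hwj, hw0⟩ := supp_pair_facts h
  have hw : w = w i • v2 i j 1 (w j / w i) := by
    funext m
    by_cases h1 : m = i
    · subst h1; simp [v2_i]
    · by_cases h2 : m = j
      · subst h2
        simp only [Pi.smul_apply, smul_eq_mul, v2_j hij]
        field_simp
      · simp [v2_ne h1 h2, hw0 m h1 h2]
  rw [← cls_smul (psiv_pow hP hwi) (v2 i j 1 (w j / w i)), ← hw]

lemma cls_v1_ne_v1 {i j : Fin 4} (hij : i ≠ j) : cls (v1 i) ≠ cls (v1 j) := by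
  apply cls_ne_of_supp
  rw [Supp_v1, Supp_v1]
  simp [hij]

lemma cls_v1_ne_v2 {m i j : Fin 4} (hij : i ≠ j) {s t : ℂ} (hs : s ≠ 0) (ht : t ≠ 0) :
    cls (v1 m) ≠ cls (v2 i j s t) := by
  apply cls_ne_of_supp
  rw [Supp_v1, Supp_v2 hij hs ht]
  intro h
  have := congrArg Set.ncard h
  rw [Set.ncard_singleton, Set.ncard_pair hij] at this
  omega

lemma cls_v2_inj {i j : Fin 4} (hij : i ≠ j) {s t : ℂ}
    (h : cls (v2 i j 1 s) = cls (v2 i j 1 t)) : s = t := by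
  obtain ⟨ξ, hξ, hw⟩ := cls_eq_iff.mp h
  have h1 := congrFun hw i
  have h2 := congrFun hw j
  simp only [Pi.smul_apply, smul_eq_mul, v2_i, v2_j hij, mul_one] at h1 h2
  rw [h2, ← h1, one_mul]

lemma I_pow4 : (I : ℂ) ^ 4 = 1 := by
  rw [show (I : ℂ) ^ 4 = (I ^ 2) ^ 2 by ring, Complex.I_sq]; norm_num

lemma negI_pow4 : (-I : ℂ) ^ 4 = 1 := by
  rw [show (-I : ℂ) ^ 4 = (I ^ 2) ^ 2 by ring, Complex.I_sq]; norm_num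

lemma one_ne_I : (1 : ℂ) ≠ I := by
  intro h; simpa using congrArg Complex.im h
lemma one_ne_negI : (1 : ℂ) ≠ -I := by
  intro h; simpa using congrArg Complex.im h
lemma I_ne_neg_one : (I : ℂ) ≠ -1 := by
  intro h; simpa using congrArg Complex.im h
lemma I_ne_negI : (I : ℂ) ≠ -I := by
  intro h
  have := congrArg Complex.im h
  simp at this
  norm_num at this
lemma neg_one_ne_negI : (-1 : ℂ) ≠ -I := by
  intro h; simpa using congrArg Complex.im h
lemma one_ne_neg_one : (1 : ℂ) ≠ -1 := by norm_num

-- ===== case: same support =====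

lemma case_same {a b : V} {i j : Fin 4} (hij : i ≠ j) (hPa : PsiV a) (hPb : PsiV b)
    (hSa : Supp a = {i, j}) (hSb : Supp b = {i, j}) (hAB : cls a ≠ cls b) :
    mult (cls a) (cls b) = 6 := by
  obtain ⟨hai, haj, ha0⟩ := supp_pair_facts hSa
  obtain ⟨hbi, hbj, hb0⟩ := supp_pair_facts hSb
  have hai4 := psiv_pow hPa hai
  have haj4 := psiv_pow hPa haj
  have hbi4 := psiv_pow hPb hbi
  have hbj4 := psiv_pow hPb hbj
  have hdet : a i * b j - a j * b i ≠ 0 := by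
    intro h
    apply hAB
    apply cls_eq_iff.mpr
    refine ⟨b i / a i, by rw [div_pow, hbi4, hai4]; norm_num, funext fun m => ?_⟩
    by_cases h1 : m = i
    · subst h1
      simp only [Pi.smul_apply, smul_eq_mul]
      field_simp
    · by_cases h2 : m = j
      · subst h2
        simp only [Pi.smul_apply, smul_eq_mul]
        field_simp
        linear_combination h
      · simp [ha0 m h1 h2, hb0 m h1 h2]
  have hXX : Xa a ∩ Xa b = {x : V | x i = 0 ∧ x j = 0} := by
    ext x
    rw [Set.mem_inter_iff, mem_Xa_of_pair hij ha0, mem_Xa_of_pair hij hb0]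
    constructor
    · rintro ⟨e1, e2⟩
      constructor
      · have h1 : (a i * b j - a j * b i) * x i = 0 := by
          linear_combination b j * e1 - a j * e2
        exact (mul_eq_zero.mp h1).resolve_left hdet
      · have h1 : (a i * b j - a j * b i) * x j = 0 := by
          linear_combination a i * e2 - b i * e1
        exact (mul_eq_zero.mp h1).resolve_left hdet
    · rintro ⟨h1, h2⟩
      rw [h1, h2]
      constructor <;> ring
  have key : LambdaHat (cls a) (cls b) =
      {cls (v1 i), cls (v1 j), cls (v2 i j 1 1), cls (v2 i j 1 I),
       cls (v2 i j 1 (-1)), cls (v2 i j 1 (-I))} := by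
    ext C
    simp only [Set.mem_insert_iff, Set.mem_singleton_iff]
    constructor
    · rintro ⟨hC, xa, xb, xc, hxa, hxb, hxc, hsub⟩
      rw [Xa_rel (cls_eq_iff.mp hxa), Xa_rel (cls_eq_iff.mp hxb)] at hsub
      have hz : ∀ m, m ≠ i → m ≠ j → xc m = 0 := by
        intro m h1 h2
        have hmem : v1 m ∈ Xa a ∩ Xa b := by
          rw [hXX]
          exact ⟨v1_ne (Ne.symm h1), v1_ne (Ne.symm h2)⟩
        have := hsub hmem
        rwa [Xa, Set.mem_setOf_eq, dot_v1] at this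
      have transfer : ∀ w : V, cls w = C → ∀ m, m ≠ i → m ≠ j → w m = 0 := by
        intro w hwC m h1 h2
        obtain ⟨ξ, hξ, hw⟩ := cls_eq_iff.mp (hxc.trans hwC.symm)
        rw [hw]
        simp [hz m h1 h2]
      rcases hC with (⟨w, hwC, hPw, hnw⟩ | ⟨w, hwC, hPw, hnw⟩) | ⟨w, hwC, hPw, hnw, hpw⟩
      · obtain ⟨m, hm⟩ := Set.ncard_eq_one.mp hnw
        obtain ⟨hwm, -⟩ := supp_single_facts hm
        have hmij : m = i ∨ m = j := by
          by_contra hcon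
          push_neg at hcon
          exact hwm (transfer w hwC m hcon.1 hcon.2)
        have := (cls_eq_v1 hPw hm).symm.trans hwC
        rcases hmij with rfl | rfl
        · exact Or.inl this.symm
        · exact Or.inr (Or.inl this.symm)
      · have hsub2 : Supp w ⊆ {i, j} := by
          intro m hm
          by_contra hcon
          simp only [Set.mem_insert_iff, Set.mem_singleton_iff, not_or] at hcon
          exact hm (transfer w hwC m hcon.1 hcon.2)
        have hSw : Supp w = {i, j} :=
          Set.eq_of_subset_of_ncard_le hsub2
            (by rw [Set.ncard_pair hij, hnw]) (Set.toFinite _)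
        have hCw := (cls_eq_v2 hij hPw hSw).symm.trans hwC
        obtain ⟨hwi', hwj', -⟩ := supp_pair_facts hSw
        have hζ : (w j / w i) ^ 4 = 1 := by
          rw [div_pow, psiv_pow hPw hwj', psiv_pow hPw hwi']; norm_num
        rcases mu4_cases hζ with hv | hv | hv | hv <;> rw [hv] at hCw
        · exact Or.inr (Or.inr (Or.inl hCw.symm))
        · exact Or.inr (Or.inr (Or.inr (Or.inl hCw.symm)))
        · exact Or.inr (Or.inr (Or.inr (Or.inr (Or.inl hCw.symm))))
        · exact Or.inr (Or.inr (Or.inr (Or.inr (Or.inr hCw.symm))))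
      · have hsub2 : Supp w ⊆ {i, j} := by
          intro m hm
          by_contra hcon
          simp only [Set.mem_insert_iff, Set.mem_singleton_iff, not_or] at hcon
          exact hm (transfer w hwC m hcon.1 hcon.2)
        have := Set.ncard_le_ncard hsub2 (Set.toFinite _)
        rw [hnw, Set.ncard_pair hij] at this
        omega
    · have hcont : ∀ s t : ℂ, Xa a ∩ Xa b ⊆ Xa (v2 i j s t) := by
        intro s t x hx
        rw [hXX] at hx
        rw [mem_Xa_v2 hij, hx.1, hx.2]
        ring
      have hcont1 : ∀ m, m = i ∨ m = j → Xa a ∩ Xa b ⊆ Xa (v1 m) := by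
        intro m hm x hx
        rw [hXX] at hx
        have : x ∈ Xa (v1 m) ↔ x m = 0 := by
          rw [Xa, Set.mem_setOf_eq, dot_v1']
        rw [this]
        rcases hm with rfl | rfl
        · exact hx.1
        · exact hx.2
      rintro (rfl | rfl | rfl | rfl | rfl | rfl)
      · exact (mem_lambdaHat_iff rfl rfl rfl).mpr ⟨mem_lambda1_v1 i, hcont1 i (Or.inl rfl)⟩
      · exact (mem_lambdaHat_iff rfl rfl rfl).mpr ⟨mem_lambda1_v1 j, hcont1 j (Or.inr rfl)⟩
      · exact (mem_lambdaHat_iff rfl rfl rfl).mpr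
          ⟨mem_lambda2_v2 hij (by norm_num) (by norm_num), hcont 1 1⟩
      · exact (mem_lambdaHat_iff rfl rfl rfl).mpr
          ⟨mem_lambda2_v2 hij (by norm_num) (I_pow4), hcont 1 I⟩
      · exact (mem_lambdaHat_iff rfl rfl rfl).mpr
          ⟨mem_lambda2_v2 hij (by norm_num) (by norm_num), hcont 1 (-1)⟩
      · exact (mem_lambdaHat_iff rfl rfl rfl).mpr
          ⟨mem_lambda2_v2 hij (by norm_num) (negI_pow4), hcont 1 (-I)⟩
  rw [mult, key]
  have hI : (I : ℂ) ≠ 0 := Complex.I_ne_zero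
  exact ncard_eq_six' (cls_v1_ne_v1 hij)
    (cls_v1_ne_v2 hij one_ne_zero one_ne_zero)
    (cls_v1_ne_v2 hij one_ne_zero hI)
    (cls_v1_ne_v2 hij one_ne_zero (by norm_num))
    (cls_v1_ne_v2 hij one_ne_zero (neg_ne_zero.mpr hI))
    (cls_v1_ne_v2 hij one_ne_zero one_ne_zero)
    (cls_v1_ne_v2 hij one_ne_zero hI)
    (cls_v1_ne_v2 hij one_ne_zero (by norm_num))
    (cls_v1_ne_v2 hij one_ne_zero (neg_ne_zero.mpr hI))
    (fun h => one_ne_I (cls_v2_inj hij h))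
    (fun h => one_ne_neg_one (cls_v2_inj hij h))
    (fun h => one_ne_negI (cls_v2_inj hij h))
    (fun h => I_ne_neg_one (cls_v2_inj hij h))
    (fun h => I_ne_negI (cls_v2_inj hij h))
    (fun h => neg_one_ne_negI (cls_v2_inj hij h))


-- ===== case: supports share exactly one index =====

lemma mem_lambda2_self {a : V} {i j : Fin 4} (hij : i ≠ j) (hPa : PsiV a)
    (hSa : Supp a = {i, j}) : cls a ∈ Lambda := by
  left; right
  exact ⟨a, rfl, hPa, by rw [hSa]; exact Set.ncard_pair hij⟩

lemma case_one {a b : V} {p q r s : Fin 4} (hpq : p ≠ q) (hpr : p ≠ r) (hqr : q ≠ r)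
    (hsp : s ≠ p) (hsq : s ≠ q) (hsr : s ≠ r)
    (hPa : PsiV a) (hPb : PsiV b) (hSa : Supp a = {p, q}) (hSb : Supp b = {q, r}) :
    mult (cls a) (cls b) = 3 := by
  obtain ⟨hap, haq, ha0⟩ := supp_pair_facts hSa
  obtain ⟨hbq, hbr, hb0⟩ := supp_pair_facts hSb
  have hap4 := psiv_pow hPa hap
  have haq4 := psiv_pow hPa haq
  have hbq4 := psiv_pow hPb hbq
  have hbr4 := psiv_pow hPb hbr
  set T : ℂ := -(a q * b r) / (a p * b q) with hT
  have hT4 : T ^ 4 = 1 := by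
    rw [hT, div_pow, neg_pow, mul_pow, mul_pow, haq4, hbr4, hap4, hbq4]
    norm_num
  -- the element of the intersection with support in {p,q,r}
  set v : V := v4 p q r s (a q * b r) (-(a p * b r)) (a p * b q) 0 with hv
  have hvp : v p = a q * b r := by rw [hv]; exact if_pos rfl
  have hvq : v q = -(a p * b r) := by rw [hv]; simp [v4, hpq.symm]
  have hvr : v r = a p * b q := by rw [hv]; simp [v4, hpr.symm, hqr.symm]
  have hvs : v s = 0 := by rw [hv]; simp [v4, hsp, hsq, hsr]
  have hvmem : v ∈ Xa a ∩ Xa b := by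
    constructor
    · rw [mem_Xa_of_pair hpq ha0, hvp, hvq]; ring
    · rw [mem_Xa_of_pair hqr hb0, hvq, hvr]; ring
  have hsmem : v1 s ∈ Xa a ∩ Xa b := by
    constructor
    · rw [mem_Xa_of_pair hpq ha0, v1_ne hsp.symm, v1_ne hsq.symm]; ring
    · rw [mem_Xa_of_pair hqr hb0, v1_ne hsq.symm, v1_ne hsr.symm]; ring
  have key : LambdaHat (cls a) (cls b) = {cls a, cls b, cls (v2 p r 1 T)} := by
    ext C
    simp only [Set.mem_insert_iff, Set.mem_singleton_iff]
    constructor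
    · rintro ⟨hC, xa, xb, xc, hxa, hxb, hxc, hsub⟩
      rw [Xa_rel (cls_eq_iff.mp hxa), Xa_rel (cls_eq_iff.mp hxb)] at hsub
      have hcs : xc s = 0 := by
        have := hsub hsmem
        rwa [Xa, Set.mem_setOf_eq, dot_v1] at this
      have hcE : a q * b r * xc p - a p * b r * xc q + a p * b q * xc r = 0 := by
        have := hsub hvmem
        rw [Xa, Set.mem_setOf_eq,
          sum_eq_four (fun m => xc m * v m) hpq hpr (Ne.symm hsp) hqr
            (Ne.symm hsq) (Ne.symm hsr), hvp, hvq, hvr, hvs] at this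
        linear_combination this
      have transfer : ∀ w : V, cls w = C →
          w s = 0 ∧ a q * b r * w p - a p * b r * w q + a p * b q * w r = 0 := by
        intro w hwC
        obtain ⟨ξ, hξ, hw⟩ := cls_eq_iff.mp (hxc.trans hwC.symm)
        rw [hw]
        simp only [Pi.smul_apply, smul_eq_mul]
        constructor
        · rw [hcs, mul_zero]
        · linear_combination ξ * hcE
      rcases hC with (⟨w, hwC, hPw, hnw⟩ | ⟨w, hwC, hPw, hnw⟩) | ⟨w, hwC, hPw, hnw, hpw⟩
      · obtain ⟨hws, hwE⟩ := transfer w hwC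
        obtain ⟨m, hm⟩ := Set.ncard_eq_one.mp hnw
        obtain ⟨hwm, hw0⟩ := supp_single_facts hm
        have hm4 : m = p ∨ m = q ∨ m = r ∨ m = s := by
          have h := univ_eq_four hpq hpr (Ne.symm hsp) hqr (Ne.symm hsq) (Ne.symm hsr)
          have hmem : m ∈ ({p, q, r, s} : Finset (Fin 4)) := by
            rw [h]; exact Finset.mem_univ m
          simpa using hmem
        exfalso
        rcases hm4 with rfl | rfl | rfl | rfl
        · rw [hw0 q hpq.symm, hw0 r hpr.symm] at hwE
          exact (mul_ne_zero (mul_ne_zero haq hbr) hwm) (by linear_combination hwE)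
        · rw [hw0 p hpq, hw0 r hqr.symm] at hwE
          exact (mul_ne_zero (mul_ne_zero hap hbr) hwm) (by linear_combination -hwE)
        · rw [hw0 p hpr, hw0 q hqr] at hwE
          exact (mul_ne_zero (mul_ne_zero hap hbq) hwm) (by linear_combination hwE)
        · exact hwm hws
      · obtain ⟨hws, hwE⟩ := transfer w hwC
        have hsub3 : Supp w ⊆ {p, q, r} := by
          intro m hm
          have hm4 : m = p ∨ m = q ∨ m = r ∨ m = s := by
            have h := univ_eq_four hpq hpr (Ne.symm hsp) hqr (Ne.symm hsq) (Ne.symm hsr)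
            have hmem : m ∈ ({p, q, r, s} : Finset (Fin 4)) := by
              rw [h]; exact Finset.mem_univ m
            simpa using hmem
          rcases hm4 with rfl | rfl | rfl | rfl
          · simp
          · simp
          · simp
          · exact absurd hws hm
        by_cases hwp : w p = 0
        · -- support must be {q,r}: class = cls b
          have hwq : w q ≠ 0 := by
            intro hwq
            rw [hwp, hwq, mul_zero, mul_zero] at hwE
            have hwr : w r ≠ 0 := by
              intro hwr
              have : Supp w = ∅ := by
                ext m
                simp only [Set.mem_empty_iff_false, iff_false, Supp, Set.mem_setOf_eq,
                  not_not]
                rcases (by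
                  have h := univ_eq_four hpq hpr (Ne.symm hsp) hqr (Ne.symm hsq)
                    (Ne.symm hsr)
                  have hmem : m ∈ ({p, q, r, s} : Finset (Fin 4)) := by
                    rw [h]; exact Finset.mem_univ m
                  simpa using hmem : m = p ∨ m = q ∨ m = r ∨ m = s) with rfl | rfl | rfl | rfl
                · exact hwp
                · exact hwq
                · exact hwr
                · exact hws
              rw [this] at hnw
              simp at hnw
            exact (mul_ne_zero (mul_ne_zero hap hbq) hwr) (by linear_combination hwE)
          have hwr : w r ≠ 0 := by
            intro hwr
            rw [hwp, hwr, mul_zero, mul_zero] at hwE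
            exact (mul_ne_zero (mul_ne_zero hap hbr) hwq) (by linear_combination -hwE)
          have hSw : Supp w = {q, r} := by
            apply Set.eq_of_subset_of_ncard_le _ (by rw [Set.ncard_pair hqr, hnw])
              (Set.toFinite _)
            intro m hm
            rcases hsub3 hm with rfl | rfl | rfl
            · exact absurd hwp hm
            · simp
            · simp [Set.mem_insert_iff]
          right; left
          rw [← hwC, cls_eq_v2 hqr hPw hSw, cls_eq_v2 hqr hPb hSb]
          have hratio : w r / w q = b r / b q := by
            rw [div_eq_div_iff hwq hbq]
            rw [hwp] at hwE
            have hbr' : (a p * b r) * (w r * b q) = (a p * b r) * (b r * w q) := by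
              linear_combination b r * hwE
            exact mul_left_cancel₀ (mul_ne_zero hap hbr) hbr'
          rw [hratio]
        · -- w p ≠ 0
          have hwq0 : w q = 0 ∨ w r = 0 := by
            by_contra hcon
            push_neg at hcon
            have : ({p, q, r} : Set (Fin 4)) ⊆ Supp w := by
              intro m hm
              rcases hm with rfl | rfl | rfl
              · exact hwp
              · exact hcon.1
              · exact hcon.2
            have hle := Set.ncard_le_ncard this (Set.toFinite _)
            rw [hnw, ncard_eq_three' hpq hpr hqr] at hle
            omega
          rcases hwq0 with hwq | hwr
          · -- support {p, r}: class = cls (v2 p r 1 T)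
            have hwr : w r ≠ 0 := by
              intro hwr
              rw [hwq, hwr, mul_zero, mul_zero] at hwE
              exact (mul_ne_zero (mul_ne_zero haq hbr) hwp) (by linear_combination hwE)
            have hSw : Supp w = {p, r} := by
              apply Set.eq_of_subset_of_ncard_le _ (by rw [Set.ncard_pair hpr, hnw])
                (Set.toFinite _)
              intro m hm
              rcases hsub3 hm with rfl | rfl | rfl
              · simp
              · exact absurd hwq hm
              · simp [Set.mem_insert_iff]
            right; right
            rw [← hwC, cls_eq_v2 hpr hPw hSw]
            have hratio : w r / w p = T := by
              rw [hT, div_eq_div_iff hwp (mul_ne_zero hap hbq)]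
              rw [hwq] at hwE
              linear_combination hwE
            rw [hratio]
          · -- support {p, q}: class = cls a
            have hwq : w q ≠ 0 := by
              intro hwq
              rw [hwq, hwr, mul_zero, mul_zero] at hwE
              exact (mul_ne_zero (mul_ne_zero haq hbr) hwp) (by linear_combination hwE)
            have hSw : Supp w = {p, q} := by
              apply Set.eq_of_subset_of_ncard_le _ (by rw [Set.ncard_pair hpq, hnw])
                (Set.toFinite _)
              intro m hm
              rcases hsub3 hm with rfl | rfl | rfl
              · simp
              · simp [Set.mem_insert_iff]
              · exact absurd hwr hm
            left
            rw [← hwC, cls_eq_v2 hpq hPw hSw, cls_eq_v2 hpq hPa hSa]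
            have hratio : w q / w p = a q / a p := by
              rw [div_eq_div_iff hwp hap]
              rw [hwr] at hwE
              have h9 : b r * (w q * a p) = b r * (a q * w p) := by linear_combination -hwE
              exact mul_left_cancel₀ hbr h9
            rw [hratio]
      · obtain ⟨hws, hwE⟩ := transfer w hwC
        exfalso
        have : Supp w = Set.univ := by
          apply Set.eq_of_subset_of_ncard_le (Set.subset_univ _) _ (Set.toFinite _)
          rw [Set.ncard_univ, hnw]
          simp
        have : s ∈ Supp w := by rw [this]; trivial
        exact this hws
    · have hDmem : cls (v2 p r 1 T) ∈ Lambda := mem_lambda2_v2 hpr (by norm_num) hT4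
      have hDsub : Xa a ∩ Xa b ⊆ Xa (v2 p r 1 T) := by
        rintro x ⟨hx1, hx2⟩
        rw [mem_Xa_of_pair hpq ha0] at hx1
        rw [mem_Xa_of_pair hqr hb0] at hx2
        rw [mem_Xa_v2 hpr, hT]
        field_simp
        linear_combination b q * hx1 - a q * hx2
      rintro (rfl | rfl | rfl)
      · exact (mem_lambdaHat_iff rfl rfl rfl).mpr
          ⟨mem_lambda2_self hpq hPa hSa, Set.inter_subset_left⟩
      · exact (mem_lambdaHat_iff rfl rfl rfl).mpr
          ⟨mem_lambda2_self hqr hPb hSb, Set.inter_subset_right⟩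
      · exact (mem_lambdaHat_iff rfl rfl rfl).mpr ⟨hDmem, hDsub⟩
  rw [mult, key]
  have hd1 : cls a ≠ cls b := by
    apply cls_ne_of_supp
    rw [hSa, hSb]
    intro h
    have : p ∈ ({q, r} : Set (Fin 4)) := by rw [← h]; simp
    simp [hpq, hpr] at this
  have hd2 : cls a ≠ cls (v2 p r 1 T) := by
    apply cls_ne_of_supp
    rw [hSa, Supp_v2 hpr one_ne_zero (pow4_ne_zero hT4)]
    intro h
    have : q ∈ ({p, r} : Set (Fin 4)) := by rw [← h]; simp
    simp [hpq.symm, hqr] at this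
  have hd3 : cls b ≠ cls (v2 p r 1 T) := by
    apply cls_ne_of_supp
    rw [hSb, Supp_v2 hpr one_ne_zero (pow4_ne_zero hT4)]
    intro h
    have : q ∈ ({p, r} : Set (Fin 4)) := by rw [← h]; simp
    simp [hpq.symm, hqr] at this
  exact ncard_eq_three' hd1 hd2 hd3


-- ===== case: disjoint supports =====

lemma v4_i' {i j k l : Fin 4} (s t u v : ℂ) : v4 i j k l s t u v i = s := if_pos rfl
lemma v4_j' {i j k l : Fin 4} (hji : j ≠ i) (s t u v : ℂ) :
    v4 i j k l s t u v j = t := by simp [v4, hji]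
lemma v4_k' {i j k l : Fin 4} (hki : k ≠ i) (hkj : k ≠ j) (s t u v : ℂ) :
    v4 i j k l s t u v k = u := by simp [v4, hki, hkj]
lemma v4_l' {i j k l : Fin 4} (hli : l ≠ i) (hlj : l ≠ j) (hlk : l ≠ k) (s t u v : ℂ) :
    v4 i j k l s t u v l = v := by simp [v4, hli, hlj, hlk]

lemma case_disj {a b : V} {i j k l : Fin 4} (hij : i ≠ j) (hik : i ≠ k) (hil : i ≠ l)
    (hjk : j ≠ k) (hjl : j ≠ l) (hkl : k ≠ l)
    (hPa : PsiV a) (hPb : PsiV b) (hSa : Supp a = {i, j}) (hSb : Supp b = {k, l}) :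
    (mult (cls a) (cls b) = 6 ↔ prod4 (a + b) = 1 ∨ prod4 (a + b) = -1) := by
  obtain ⟨hai, haj, ha0⟩ := supp_pair_facts hSa
  obtain ⟨hbk, hbl, hb0⟩ := supp_pair_facts hSb
  have hai4 := psiv_pow hPa hai
  have haj4 := psiv_pow hPa haj
  have hbk4 := psiv_pow hPb hbk
  have hbl4 := psiv_pow hPb hbl
  have hPval : prod4 (a + b) = a i * a j * b k * b l := by
    rw [prod4, prod_eq_four _ hij hik hil hjk hjl hkl]
    have h1 : (a + b) i = a i := by simp [hb0 i hik hil]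
    have h2 : (a + b) j = a j := by simp [hb0 j hjk hjl]
    have h3 : (a + b) k = b k := by simp [ha0 k (Ne.symm hik) (Ne.symm hjk)]
    have h4 : (a + b) l = b l := by simp [ha0 l (Ne.symm hil) (Ne.symm hjl)]
    rw [h1, h2, h3, h4]
  have humem : v2 i j (a j) (-(a i)) ∈ Xa a ∩ Xa b := by
    constructor
    · rw [mem_Xa_of_pair hij ha0, v2_i, v2_j hij]; ring
    · rw [mem_Xa_of_pair hkl hb0, v2_ne (Ne.symm hik) (Ne.symm hjk),
        v2_ne (Ne.symm hil) (Ne.symm hjl)]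
      ring
  have humem' : v2 k l (b l) (-(b k)) ∈ Xa a ∩ Xa b := by
    constructor
    · rw [mem_Xa_of_pair hij ha0, v2_ne hik hil, v2_ne hjk hjl]; ring
    · rw [mem_Xa_of_pair hkl hb0, v2_i, v2_j hkl]; ring
  -- a general description of the forward analysis
  have fwd : ∀ C ∈ LambdaHat (cls a) (cls b),
      C = cls a ∨ C = cls b ∨
      ((a i * a j * b k * b l = 1 ∨ a i * a j * b k * b l = -1) ∧
        ∃ t : ℂ, t ^ 4 = 1 ∧
          C = cls (v4 i j k l 1 (a j / a i) t (t * (b l / b k)))) := by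
    rintro C ⟨hC, xa, xb, xc, hxa, hxb, hxc, hsub⟩
    rw [Xa_rel (cls_eq_iff.mp hxa), Xa_rel (cls_eq_iff.mp hxb)] at hsub
    have hcE1 : a j * xc i - a i * xc j = 0 := by
      have := hsub humem
      rw [Xa, Set.mem_setOf_eq,
        sum_eq_pair hij (f := fun m => xc m * v2 i j (a j) (-(a i)) m)
          (fun m h1 h2 => by simp [v2_ne h1 h2]), v2_i, v2_j hij] at this
      linear_combination this
    have hcE2 : b l * xc k - b k * xc l = 0 := by
      have := hsub humem'
      rw [Xa, Set.mem_setOf_eq,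
        sum_eq_pair hkl (f := fun m => xc m * v2 k l (b l) (-(b k)) m)
          (fun m h1 h2 => by simp [v2_ne h1 h2]), v2_i, v2_j hkl] at this
      linear_combination this
    have transfer : ∀ w : V, cls w = C →
        a j * w i - a i * w j = 0 ∧ b l * w k - b k * w l = 0 := by
      intro w hwC
      obtain ⟨ξ, hξ, hw⟩ := cls_eq_iff.mp (hxc.trans hwC.symm)
      rw [hw]
      simp only [Pi.smul_apply, smul_eq_mul]
      exact ⟨by linear_combination ξ * hcE1, by linear_combination ξ * hcE2⟩
    have hmem4 : ∀ m : Fin 4, m = i ∨ m = j ∨ m = k ∨ m = l := by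
      intro m
      have h := univ_eq_four hij hik hil hjk hjl hkl
      have hmem : m ∈ ({i, j, k, l} : Finset (Fin 4)) := by
        rw [h]; exact Finset.mem_univ m
      simpa using hmem
    rcases hC with (⟨w, hwC, hPw, hnw⟩ | ⟨w, hwC, hPw, hnw⟩) | ⟨w, hwC, hPw, hnw, hpw⟩
    · obtain ⟨hwE1, hwE2⟩ := transfer w hwC
      obtain ⟨m, hm⟩ := Set.ncard_eq_one.mp hnw
      obtain ⟨hwm, hw0⟩ := supp_single_facts hm
      exfalso
      rcases hmem4 m with rfl | rfl | rfl | rfl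
      · rw [hw0 j hij.symm] at hwE1
        exact (mul_ne_zero haj hwm) (by linear_combination hwE1)
      · rw [hw0 i hij] at hwE1
        exact (mul_ne_zero hai hwm) (by linear_combination -hwE1)
      · rw [hw0 l hkl.symm] at hwE2
        exact (mul_ne_zero hbl hwm) (by linear_combination hwE2)
      · rw [hw0 k hkl] at hwE2
        exact (mul_ne_zero hbk hwm) (by linear_combination -hwE2)
    · obtain ⟨hwE1, hwE2⟩ := transfer w hwC
      by_cases hwi : w i = 0
      · -- then w j = 0 and the support is {k, l} : class b
        have hwj : w j = 0 := by
          have : a i * w j = 0 := by rw [hwi] at hwE1; linear_combination -hwE1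
          exact (mul_eq_zero.mp this).resolve_left hai
        have hwk : w k ≠ 0 := by
          intro hwk
          have hwl : w l = 0 := by
            have : b k * w l = 0 := by rw [hwk] at hwE2; linear_combination -hwE2
            exact (mul_eq_zero.mp this).resolve_left hbk
          have : Supp w = ∅ := by
            ext m
            simp only [Set.mem_empty_iff_false, iff_false, Supp, Set.mem_setOf_eq, not_not]
            rcases hmem4 m with rfl | rfl | rfl | rfl
            exacts [hwi, hwj, hwk, hwl]
          rw [this] at hnw
          simp at hnw
        have hwl : w l ≠ 0 := by
          intro hwl
          have : b l * w k = 0 := by rw [hwl] at hwE2; linear_combination hwE2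
          exact hwk ((mul_eq_zero.mp this).resolve_left hbl)
        have hSw : Supp w = {k, l} := by
          apply Set.eq_of_subset_of_ncard_le _ (by rw [Set.ncard_pair hkl, hnw])
            (Set.toFinite _)
          intro m hm
          rcases hmem4 m with rfl | rfl | rfl | rfl
          · exact absurd hwi hm
          · exact absurd hwj hm
          · simp
          · simp [Set.mem_insert_iff]
        right; left
        rw [← hwC, cls_eq_v2 hkl hPw hSw, cls_eq_v2 hkl hPb hSb]
        have hratio : w l / w k = b l / b k := by
          rw [div_eq_div_iff hwk hbk]
          linear_combination -hwE2
        rw [hratio]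
      · have hwj : w j ≠ 0 := by
          intro hwj
          have : a j * w i = 0 := by rw [hwj] at hwE1; linear_combination hwE1
          exact hwi ((mul_eq_zero.mp this).resolve_left haj)
        have hSw : Supp w = {i, j} := by
          symm
          apply Set.eq_of_subset_of_ncard_le _ (by rw [hnw, Set.ncard_pair hij])
            (Set.toFinite _)
          intro m hm
          rcases hm with rfl | rfl
          · exact hwi
          · exact hwj
        left
        rw [← hwC, cls_eq_v2 hij hPw hSw, cls_eq_v2 hij hPa hSa]
        have hratio : w j / w i = a j / a i := by
          rw [div_eq_div_iff hwi hai]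
          linear_combination -hwE1
        rw [hratio]
    · obtain ⟨hwE1, hwE2⟩ := transfer w hwC
      have hSw : Supp w = Set.univ := by
        apply Set.eq_of_subset_of_ncard_le (Set.subset_univ _) _ (Set.toFinite _)
        rw [Set.ncard_univ, hnw]
        simp
      have hwne : ∀ m, w m ≠ 0 := by
        intro m
        have : m ∈ Supp w := by rw [hSw]; trivial
        exact this
      have hw4 : ∀ m, w m ^ 4 = 1 := fun m => psiv_pow hPw (hwne m)
      have hpweq : prod4 w = w i * w j * w k * w l :=
        prod_eq_four _ hij hik hil hjk hjl hkl
      have hbig : (a i * a j * b k * b l) ^ 2 * (w i ^ 4 * w k ^ 4) =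
          (a i ^ 4 * b k ^ 4) * (w i * w j * w k * w l) ^ 2 := by
        linear_combination
          (a i ^ 2 * b k ^ 2 * w i ^ 2 * w k ^ 2 * (a j * w i + a i * w j) *
            (b l * w k) ^ 2) * hwE1 +
          (a i ^ 2 * b k ^ 2 * w i ^ 2 * w k ^ 2 * (a i * w j) ^ 2 *
            (b l * w k + b k * w l)) * hwE2
      rw [hw4 i, hw4 k, hai4, hbk4, ← hpweq] at hbig
      have hpw2 : prod4 w ^ 2 = 1 := by
        rcases hpw with h | h <;> rw [h] <;> norm_num
      rw [hpw2] at hbig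
      have hP2 : (a i * a j * b k * b l) ^ 2 = 1 := by linear_combination hbig
      refine Or.inr (Or.inr ⟨sq_cases hP2, w k / w i, ?_, ?_⟩)
      · rw [div_pow, hw4 k, hw4 i]; norm_num
      · rw [← hwC]
        have hwrep : w = w i • v4 i j k l 1 (a j / a i) (w k / w i)
            ((w k / w i) * (b l / b k)) := by
          funext m
          rcases hmem4 m with rfl | rfl | rfl | rfl
          · simp only [Pi.smul_apply, smul_eq_mul, v4_i']; ring
          · simp only [Pi.smul_apply, smul_eq_mul, v4_j' hij.symm]
            field_simp
            linear_combination -hwE1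
          · simp only [Pi.smul_apply, smul_eq_mul, v4_k' (Ne.symm hik) (Ne.symm hjk)]
            field_simp [hwne i]
          · simp only [Pi.smul_apply, smul_eq_mul,
              v4_l' (Ne.symm hil) (Ne.symm hjl) (Ne.symm hkl)]
            field_simp [hwne i, hbk]
            linear_combination -hwE2
        rw [← cls_smul (hw4 i)
          (v4 i j k l 1 (a j / a i) (w k / w i) ((w k / w i) * (b l / b k))), ← hwrep]
  by_cases hP : a i * a j * b k * b l = 1 ∨ a i * a j * b k * b l = -1
  · -- multiplicity 6
    have hP2 : (a i * a j * b k * b l) ^ 2 = 1 := by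
      rcases hP with h | h <;> rw [h] <;> norm_num
    have hy4 : (a j / a i) ^ 4 = 1 := by rw [div_pow, haj4, hai4]; norm_num
    have hz4 : (b l / b k) ^ 4 = 1 := by rw [div_pow, hbl4, hbk4]; norm_num
    have hc4mem : ∀ t : ℂ, t ^ 4 = 1 →
        cls (v4 i j k l 1 (a j / a i) t (t * (b l / b k))) ∈ Lambda := by
      intro t ht4
      apply mem_lambda3_v4 hij hik hil hjk hjl hkl (by norm_num) hy4 ht4
        (by rw [mul_pow, ht4, hz4]; norm_num)
      apply sq_cases
      have hstep : (1 * (a j / a i) * t * (t * (b l / b k))) ^ 2 *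
          (a i ^ 4 * b k ^ 4) = t ^ 4 * (a i * a j * b k * b l) ^ 2 := by
        field_simp
      rw [hai4, hbk4, ht4, hP2] at hstep
      linear_combination hstep
    have hc4sub : ∀ t : ℂ,
        Xa a ∩ Xa b ⊆ Xa (v4 i j k l 1 (a j / a i) t (t * (b l / b k))) := by
      rintro t x ⟨hx1, hx2⟩
      rw [mem_Xa_of_pair hij ha0] at hx1
      rw [mem_Xa_of_pair hkl hb0] at hx2
      rw [Xa, Set.mem_setOf_eq,
        sum_eq_four (fun m => v4 i j k l 1 (a j / a i) t (t * (b l / b k)) m * x m)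
          hij hik hil hjk hjl hkl, v4_i', v4_j' hij.symm,
        v4_k' (Ne.symm hik) (Ne.symm hjk), v4_l' (Ne.symm hil) (Ne.symm hjl) (Ne.symm hkl)]
      field_simp
      linear_combination b k * hx1 + t * a i * hx2
    have key : LambdaHat (cls a) (cls b) =
        {cls a, cls b,
         cls (v4 i j k l 1 (a j / a i) 1 (1 * (b l / b k))),
         cls (v4 i j k l 1 (a j / a i) I (I * (b l / b k))),
         cls (v4 i j k l 1 (a j / a i) (-1) ((-1) * (b l / b k))),
         cls (v4 i j k l 1 (a j / a i) (-I) ((-I) * (b l / b k)))} := by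
      ext C
      simp only [Set.mem_insert_iff, Set.mem_singleton_iff]
      constructor
      · intro hC
        rcases fwd C hC with h | h | ⟨-, t, ht4, rfl⟩
        · exact Or.inl h
        · exact Or.inr (Or.inl h)
        · rcases mu4_cases ht4 with rfl | rfl | rfl | rfl
          · exact Or.inr (Or.inr (Or.inl rfl))
          · exact Or.inr (Or.inr (Or.inr (Or.inl rfl)))
          · exact Or.inr (Or.inr (Or.inr (Or.inr (Or.inl rfl))))
          · exact Or.inr (Or.inr (Or.inr (Or.inr (Or.inr rfl))))
      · have hmema : cls a ∈ LambdaHat (cls a) (cls b) :=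
          (mem_lambdaHat_iff rfl rfl rfl).mpr
            ⟨mem_lambda2_self hij hPa hSa, Set.inter_subset_left⟩
        have hmemb : cls b ∈ LambdaHat (cls a) (cls b) :=
          (mem_lambdaHat_iff rfl rfl rfl).mpr
            ⟨mem_lambda2_self hkl hPb hSb, Set.inter_subset_right⟩
        rintro (rfl | rfl | rfl | rfl | rfl | rfl)
        · exact hmema
        · exact hmemb
        · exact (mem_lambdaHat_iff rfl rfl rfl).mpr
            ⟨hc4mem 1 (by norm_num), hc4sub 1⟩
        · exact (mem_lambdaHat_iff rfl rfl rfl).mpr ⟨hc4mem I I_pow4, hc4sub I⟩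
        · exact (mem_lambdaHat_iff rfl rfl rfl).mpr
            ⟨hc4mem (-1) (by norm_num), hc4sub (-1)⟩
        · exact (mem_lambdaHat_iff rfl rfl rfl).mpr ⟨hc4mem (-I) negI_pow4, hc4sub (-I)⟩
    have hSc4 : ∀ t : ℂ, t ≠ 0 →
        Supp (v4 i j k l 1 (a j / a i) t (t * (b l / b k))) = Set.univ := by
      intro t ht
      exact Supp_v4 hij hik hil hjk hjl hkl one_ne_zero (div_ne_zero haj hai) ht
        (mul_ne_zero ht (div_ne_zero hbl hbk))
    have hane : ∀ t : ℂ, t ≠ 0 →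
        cls a ≠ cls (v4 i j k l 1 (a j / a i) t (t * (b l / b k))) := by
      intro t ht
      apply cls_ne_of_supp
      rw [hSa, hSc4 t ht]
      intro h
      have : k ∈ ({i, j} : Set (Fin 4)) := by rw [h]; trivial
      simp [Ne.symm hik, Ne.symm hjk] at this
    have hbne : ∀ t : ℂ, t ≠ 0 →
        cls b ≠ cls (v4 i j k l 1 (a j / a i) t (t * (b l / b k))) := by
      intro t ht
      apply cls_ne_of_supp
      rw [hSb, hSc4 t ht]
      intro h
      have : i ∈ ({k, l} : Set (Fin 4)) := by rw [h]; trivial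
      simp [hik, hil] at this
    have hc4inj : ∀ t t' : ℂ,
        cls (v4 i j k l 1 (a j / a i) t (t * (b l / b k))) =
          cls (v4 i j k l 1 (a j / a i) t' (t' * (b l / b k))) → t = t' := by
      intro t t' h
      obtain ⟨ξ, hξ, hw⟩ := cls_eq_iff.mp h
      have h1 := congrFun hw i
      have h2 := congrFun hw k
      simp only [Pi.smul_apply, smul_eq_mul, v4_i',
        v4_k' (Ne.symm hik) (Ne.symm hjk), mul_one] at h1 h2
      rw [h2, ← h1, one_mul]
    have habne : cls a ≠ cls b := by
      apply cls_ne_of_supp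
      rw [hSa, hSb]
      intro h
      have : i ∈ ({k, l} : Set (Fin 4)) := by rw [← h]; simp
      simp [hik, hil] at this
    have hIne : (I : ℂ) ≠ 0 := Complex.I_ne_zero
    have hcount : mult (cls a) (cls b) = 6 := by
      rw [mult, key]
      exact ncard_eq_six' habne (hane 1 one_ne_zero) (hane I hIne)
        (hane (-1) (by norm_num)) (hane (-I) (neg_ne_zero.mpr hIne))
        (hbne 1 one_ne_zero) (hbne I hIne) (hbne (-1) (by norm_num))
        (hbne (-I) (neg_ne_zero.mpr hIne))
        (fun h => one_ne_I (hc4inj _ _ h))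
        (fun h => one_ne_neg_one (hc4inj _ _ h))
        (fun h => one_ne_negI (hc4inj _ _ h))
        (fun h => I_ne_neg_one (hc4inj _ _ h))
        (fun h => I_ne_negI (hc4inj _ _ h))
        (fun h => neg_one_ne_negI (hc4inj _ _ h))
    rw [hPval]
    exact iff_of_true hcount hP
  · -- multiplicity 2
    have key : LambdaHat (cls a) (cls b) = {cls a, cls b} := by
      ext C
      simp only [Set.mem_insert_iff, Set.mem_singleton_iff]
      constructor
      · intro hC
        rcases fwd C hC with h | h | ⟨h, -⟩
        · exact Or.inl h
        · exact Or.inr h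
        · exact absurd h hP
      · rintro (rfl | rfl)
        · exact (mem_lambdaHat_iff rfl rfl rfl).mpr
            ⟨mem_lambda2_self hij hPa hSa, Set.inter_subset_left⟩
        · exact (mem_lambdaHat_iff rfl rfl rfl).mpr
            ⟨mem_lambda2_self hkl hPb hSb, Set.inter_subset_right⟩
    have habne : cls a ≠ cls b := by
      apply cls_ne_of_supp
      rw [hSa, hSb]
      intro h
      have : i ∈ ({k, l} : Set (Fin 4)) := by rw [← h]; simp
      simp [hik, hil] at this
    have hcount : mult (cls a) (cls b) = 2 := by
      rw [mult, key]
      exact Set.ncard_pair habne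
    rw [hPval]
    exact iff_of_false (by omega) hP


-- ===== assembly =====

lemma finish_one {a b : V} {p q r : Fin 4} (hpq : p ≠ q) (hpr : p ≠ r) (hqr : q ≠ r)
    (hPa : PsiV a) (hPb : PsiV b) (hSa : Supp a = {p, q}) (hSb : Supp b = {q, r}) :
    (mult (cls a) (cls b) = 6 ↔
      (Supp a = Supp b ∨
        (Supp a ∩ Supp b = ∅ ∧ (prod4 (a + b) = 1 ∨ prod4 (a + b) = -1)))) := by
  obtain ⟨s, hsp, hsq, hsr⟩ := exists_fourth hpq hpr hqr
  have h3 := case_one hpq hpr hqr hsp hsq hsr hPa hPb hSa hSb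
  refine iff_of_false (by rw [h3]; omega) ?_
  rintro (h | ⟨h, -⟩)
  · rw [hSa, hSb] at h
    have : p ∈ ({q, r} : Set (Fin 4)) := by rw [← h]; simp
    simp [hpq, hpr] at this
  · have : q ∈ Supp a ∩ Supp b := by
      rw [hSa, hSb]
      constructor <;> simp
    rw [h] at this
    exact this

theorem stmt18' : ∀ A ∈ Lambda2, ∀ B ∈ Lambda2, A ≠ B → ∀ a b : V, cls a = A → cls b = B →
    (mult A B = 6 ↔
      (Supp a = Supp b ∨
        (Supp a ∩ Supp b = ∅ ∧ (prod4 (a + b) = 1 ∨ prod4 (a + b) = -1)))) := by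
  intro A hA B hB hAB a b ha hb
  subst ha
  subst hb
  obtain ⟨hPa, hna⟩ := lambda2_rep hA rfl
  obtain ⟨hPb, hnb⟩ := lambda2_rep hB rfl
  obtain ⟨i, j, hij, hSa⟩ := Set.ncard_eq_two.mp hna
  obtain ⟨k, l, hkl, hSb⟩ := Set.ncard_eq_two.mp hnb
  by_cases hki : k = i
  · rw [hki] at hSb hkl
    by_cases hlj : l = j
    · rw [hlj] at hSb
      exact iff_of_true (case_same hij hPa hPb hSa hSb hAB)
        (Or.inl (hSa.trans hSb.symm))
    · have hSa' : Supp a = {j, i} := by rw [hSa, Set.pair_comm]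
      exact finish_one (Ne.symm hij) (Ne.symm hlj) hkl hPa hPb hSa' hSb
  · by_cases hkj : k = j
    · rw [hkj] at hSb hkl
      by_cases hli : l = i
      · rw [hli] at hSb
        have hSb' : Supp b = {i, j} := by rw [hSb, Set.pair_comm]
        exact iff_of_true (case_same hij hPa hPb hSa hSb' hAB)
          (Or.inl (hSa.trans hSb'.symm))
      · exact finish_one hij (Ne.symm hli) hkl hPa hPb hSa hSb
    · by_cases hli : l = i
      · rw [hli] at hSb hkl
        have hSb' : Supp b = {i, k} := by rw [hSb, Set.pair_comm]
        exact finish_one (Ne.symm hij) (Ne.symm hkj) (Ne.symm hki) hPa hPb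
          (by rw [hSa, Set.pair_comm]) hSb'
      · by_cases hlj : l = j
        · rw [hlj] at hSb hkl
          have hSb' : Supp b = {j, k} := by rw [hSb, Set.pair_comm]
          exact finish_one hij (Ne.symm hki) (Ne.symm hkj) hPa hPb hSa hSb'
        · -- disjoint supports
          have hik' : i ≠ k := Ne.symm hki
          have hil' : i ≠ l := Ne.symm hli
          have hjk' : j ≠ k := Ne.symm hkj
          have hjl' : j ≠ l := Ne.symm hlj
          have hiff := case_disj hij hik' hil' hjk' hjl' hkl hPa hPb hSa hSb
          refine hiff.trans ?_
          constructor
          · intro h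
            right
            refine ⟨?_, h⟩
            rw [hSa, hSb]
            ext m
            simp only [Set.mem_inter_iff, Set.mem_insert_iff, Set.mem_singleton_iff,
              Set.mem_empty_iff_false, iff_false, not_and]
            rintro (rfl | rfl)
            · simp [hik', hil']
            · simp [hjk', hjl']
          · rintro (h | ⟨-, h⟩)
            · exfalso
              rw [hSa, hSb] at h
              have : i ∈ ({k, l} : Set (Fin 4)) := by rw [← h]; simp
              simp [hik', hil'] at this
            · exact h


/-- for distinct `[a], [b] ∈ Λ₂`, `mult(a,b) = 6` iff either `Supp a = Supp b`,
or `Supp a ∩ Supp b = ∅` and `prod (a+b) = ±1` (a condition independent of the chosen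
representatives). -/
theorem stmt18 : ∀ A ∈ Lambda2, ∀ B ∈ Lambda2, A ≠ B → ∀ a b : V, cls a = A → cls b = B →
    (mult A B = 6 ↔
      (Supp a = Supp b ∨
        (Supp a ∩ Supp b = ∅ ∧ (prod4 (a + b) = 1 ∨ prod4 (a + b) = -1)))) := by
  exact stmt18'

end G31
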